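/- For n : ℤ let T_n be the ℤ-indexed Chebyshev polynomial of the first kind over ℝ and set S_n := U_{n−1}, where U is the ℤ-indexed Chebyshev polynomial of the second kind. For integers p, q, r, s define p_{p,q,r,s}(x,y) := T_{s+p}(x)·T_{q−r}(y)·S_{s}(x)·S_{−r}(y) − S_{s+p}(x)·S_{q−r}(y)·T_{s}(x)·T_{−r}(y). Then for every integer n ≥ 1 and all real x, y: p_{2, 2n+1, n+1, −1}(x, y) = x; explicitly, T_1(x)·T_n(y)·S_{−1}(x)·S_{−(n+1)}(y) − S_1(x)·S_n(y)·T_{−1}(x)·T_{n+1}(y) = x. (This is the computation showing that for the (2, 2n+1) torus knots the curve V_{2,2n+1,n+1,−1} is the arc x = 0.) -/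

import Mathlib

noncomputable section

open Polynomial Polynomial.Chebyshev

lemma cheb_step (R : Type*) [CommRing R] (m : ℤ) :
    T R (m + 1) * U R (m + 1) - U R m * T R (m + 2)
      = T R m * U R m - U R (m - 1) * T R (m + 1) := by
  rw [T_add_two, U_add_one]
  ring

lemma cheb_key (R : Type*) [CommRing R] (n : ℤ) :
    T R n * U R n - U R (n - 1) * T R (n + 1) = 1 := by
  induction n using Int.induction_on with
  | zero => simp
  | succ k ih =>
    have h := cheb_step R k
    rw [show (k:ℤ) + 1 - 1 = k by ring, show (k:ℤ) + 1 + 1 = k + 2 by ring, h, ih]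
  | pred k ih =>
    have h := cheb_step R (-(k:ℤ) - 1)
    rw [show (-(k:ℤ) - 1) + 1 = -k by ring, show (-(k:ℤ) - 1) + 2 = -k + 1 by ring] at h
    rw [show (-(k:ℤ) - 1 + 1 : ℤ) = -k by ring, ← h, ih]

/-- Evaluation of the `ℤ`-indexed Chebyshev polynomial of the first kind, so that
`cos (n·u) = chebT n (cos u)`. -/
def chebT (n : ℤ) (x : ℝ) : ℝ := (Polynomial.Chebyshev.T ℝ n).eval x

/-- `S_n := U_{n−1}` evaluated at a real, so that `sin (n·u) = sin u · chebS n (cos u)`. -/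
def chebS (n : ℤ) (x : ℝ) : ℝ := (Polynomial.Chebyshev.U ℝ (n - 1)).eval x

/-- For the `(2, 2n+1)` torus knots the defining polynomial of the curve
`V_{2,2n+1,n+1,−1}` is `x`: with `p = 2`, `q = 2n+1`, `r = n+1`, `s = −1`,
`p_{p,q,r,s}(x,y) = T_1(x)T_n(y)S_{−1}(x)S_{−(n+1)}(y) − S_1(x)S_n(y)T_{−1}(x)T_{n+1}(y)
= x`. -/
theorem two_strand_torus_knot_polynomial :
    ∀ n : ℤ, 1 ≤ n → ∀ x y : ℝ,
      chebT 1 x * chebT n y * chebS (-1) x * chebS (-(n + 1)) y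
        - chebS 1 x * chebS n y * chebT (-1) x * chebT (n + 1) y = x := by
  intro n _ x y
  have key := congrArg (Polynomial.eval y) (cheb_key ℝ n)
  simp only [Polynomial.eval_sub, Polynomial.eval_mul, Polynomial.eval_one] at key
  simp only [chebT, chebS]
  rw [show (-1 : ℤ) - 1 = -0 - 2 by ring, U_neg_sub_two, U_zero,
      show (-(n+1) : ℤ) - 1 = -n - 2 by ring, U_neg_sub_two,
      T_one, T_neg_one, show (1:ℤ) - 1 = 0 by ring, U_zero]
  simp only [Polynomial.eval_neg, Polynomial.eval_one, Polynomial.eval_X]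
  linear_combination x * key
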